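/- The set T equals the downward closure, within the nonnegative orthant of ℝ³ (with the componentwise order), of the set {a·α₁ + b·α₂ + c·α₃ : a, b, c ≥ 0, a + b + c ≤ 1}; that is, a point x ∈ ℝ³ with all coordinates ≥ 0 lies in T if and only if there exist a, b, c ≥ 0 with a + b + c ≤ 1 such that x ≤ a·α₁ + b·α₂ + c·α₃ componentwise. -/
import Mathlib


/-- The set `T = {x ∈ ℝ³ : 0 ≤ xₖ ≤ 1 for each k, and x₁+x₂+x₃ ≤ 2}`. -/
def T : Set (ℝ × ℝ × ℝ) :=
  {x | 0 ≤ x.1 ∧ x.1 ≤ 1 ∧ 0 ≤ x.2.1 ∧ x.2.1 ≤ 1 ∧ 0 ≤ x.2.2 ∧ x.2.2 ≤ 1 ∧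
    x.1 + x.2.1 + x.2.2 ≤ 2}

/-- `α₁ = (1,0,1)`, `α₂ = (1,1,0)`, `α₃ = (0,1,1)`. -/
def α₁ : ℝ × ℝ × ℝ := (1, 0, 1)
def α₂ : ℝ × ℝ × ℝ := (1, 1, 0)
def α₃ : ℝ × ℝ × ℝ := (0, 1, 1)

theorem stmt_4 (x₁ x₂ x₃ : ℝ) (h₁ : 0 ≤ x₁) (h₂ : 0 ≤ x₂) (h₃ : 0 ≤ x₃) :
    (x₁, x₂, x₃) ∈ T ↔
      ∃ a b c : ℝ, 0 ≤ a ∧ 0 ≤ b ∧ 0 ≤ c ∧ a + b + c ≤ 1 ∧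
        x₁ ≤ a * α₁.1 + b * α₂.1 + c * α₃.1 ∧
        x₂ ≤ a * α₁.2.1 + b * α₂.2.1 + c * α₃.2.1 ∧
        x₃ ≤ a * α₁.2.2 + b * α₂.2.2 + c * α₃.2.2 := by
  simp only [T, α₁, α₂, α₃, Set.mem_setOf_eq]
  constructor
  · rintro ⟨h1, h2, h3, h4, h5, h6, h7⟩
    rcases le_or_gt x₂ (x₁ + x₃) with hA | hA
    · rcases le_or_gt x₃ (x₁ + x₂) with hB | hB
      · rcases le_or_gt x₁ (x₂ + x₃) with hC | hC
        · exact ⟨(x₁ - x₂ + x₃) / 2, (x₁ + x₂ - x₃) / 2, (-x₁ + x₂ + x₃) / 2,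
            by linarith, by linarith, by linarith, by linarith, by norm_num <;> linarith,
            by norm_num <;> linarith, by norm_num <;> linarith⟩
        · exact ⟨x₃, x₁ - x₃, 0, by linarith, by linarith, le_refl 0,
            by linarith, by norm_num <;> linarith, by norm_num <;> linarith, by norm_num <;> linarith⟩
      · exact ⟨x₁, 0, x₃ - x₁, by linarith, le_refl 0, by linarith,
          by linarith, by norm_num <;> linarith, by norm_num <;> linarith, by norm_num <;> linarith⟩
    · exact ⟨0, x₁, x₂ - x₁, le_refl 0, by linarith, by linarith, by linarith,
        by norm_num <;> linarith, by norm_num <;> linarith, by norm_num <;> linarith⟩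
  · rintro ⟨a, b, c, ha, hb, hc, habc, k1, k2, k3⟩
    norm_num at k1 k2 k3
    exact ⟨h₁, by linarith, h₂, by linarith, h₃, by linarith, by linarith⟩
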